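/- arXiv:2601.07512 — 5 statements merged into one kernel-verified Lean document; each statement's English description precedes it below -/
import Mathlib

section
/- Let d be a positive integer, let σ : ℝ → ℝ be differentiable with σ(t) > 0 for all t, and let μ : ℝ → ℝ^d (Euclidean space) be differentiable. Define the Gaussian conditional density p(t,x) = (2π σ(t)²)^{-d/2} exp(−‖x − μ(t)‖² / (2σ(t)²)) and the velocity field u(t,x) = (σ'(t)/σ(t))·(x − μ(t)) + μ'(t). Then the pair (p, u) satisfies the continuity equation: for every t and every x ∈ ℝ^d, ∂_t p(t,x) + div_x( p(t,·) u(t,·) )(x) = 0, where div_x denotes the spatial divergence (the trace of the spatial Fréchet derivative of the vector field x ↦ p(t,x) u(t,x)). -/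
open Real

lemma trace_smul_id' (d : ℕ) (a : ℝ) :
    LinearMap.trace ℝ (EuclideanSpace ℝ (Fin d))
      ((a • ContinuousLinearMap.id ℝ (EuclideanSpace ℝ (Fin d))).toLinearMap) = a * d := by
  rw [ContinuousLinearMap.coe_smul, ContinuousLinearMap.coe_id, map_smul, LinearMap.trace_id,
    finrank_euclideanSpace_fin, smul_eq_mul]

lemma trace_smulRight' (d : ℕ) (φ : EuclideanSpace ℝ (Fin d) →L[ℝ] ℝ)
    (w : EuclideanSpace ℝ (Fin d)) :
    LinearMap.trace ℝ (EuclideanSpace ℝ (Fin d)) (φ.smulRight w).toLinearMap = φ w := by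
  classical
  set b := EuclideanSpace.basisFun (Fin d) ℝ with hb
  rw [LinearMap.trace_eq_matrix_trace ℝ b.toBasis, Matrix.trace]
  have hdiag : ∀ i, (LinearMap.toMatrix b.toBasis b.toBasis (φ.smulRight w).toLinearMap).diag i
      = φ (b i) * w i := by
    intro i
    simp [Matrix.diag, LinearMap.toMatrix_apply, EuclideanSpace.basisFun_repr]
    exact Or.inl rfl
  rw [Finset.sum_congr rfl fun i _ => hdiag i]
  have hsum : ∑ i, w i • (b i) = w := by
    simpa [hb, EuclideanSpace.basisFun_repr] using b.sum_repr w
  calc ∑ i, φ (b i) * w i = ∑ i, φ (w i • b i) := by simp [mul_comm]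
    _ = φ (∑ i, w i • b i) := by rw [map_sum]
    _ = φ w := by rw [hsum]

/-- The divergence of a vector field `v` on Euclidean space at `x`:
the trace of its Fréchet derivative at `x`. -/
noncomputable def divergence {d : ℕ}
    (v : EuclideanSpace ℝ (Fin d) → EuclideanSpace ℝ (Fin d))
    (x : EuclideanSpace ℝ (Fin d)) : ℝ :=
  LinearMap.trace ℝ (EuclideanSpace ℝ (Fin d)) (fderiv ℝ v x).toLinearMap

lemma gaussian_time_deriv (d : ℕ) (σ : ℝ → ℝ) (hσ : Differentiable ℝ σ)
    (hσpos : ∀ t, 0 < σ t)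
    (μ : ℝ → EuclideanSpace ℝ (Fin d)) (hμ : Differentiable ℝ μ)
    (t : ℝ) (x : EuclideanSpace ℝ (Fin d)) :
    deriv (fun τ => (2 * π * (σ τ) ^ 2) ^ (-(d : ℝ) / 2) *
        Real.exp (-‖x - μ τ‖ ^ 2 / (2 * (σ τ) ^ 2))) t
      = ((2 * π * (σ t) ^ 2) ^ (-(d : ℝ) / 2) *
          Real.exp (-‖x - μ t‖ ^ 2 / (2 * (σ t) ^ 2))) *
        (-(d : ℝ) * deriv σ t / σ t
          + (inner ℝ (x - μ t) (deriv μ t) : ℝ) / (σ t) ^ 2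
          + ‖x - μ t‖ ^ 2 * deriv σ t / (σ t) ^ 3) := by
  have hσne : σ t ≠ 0 := (hσpos t).ne'
  have hbase : (0:ℝ) < 2 * π * (σ t) ^ 2 := by positivity
  have h1 : HasDerivAt (fun τ => (σ τ) ^ 2) (2 * σ t ^ 1 * deriv σ t) t := by
    have h := ((hσ t).hasDerivAt).pow 2
    simp only [Nat.cast_ofNat] at h
    exact h
  have h2 := h1.const_mul (2 * π)
  have h3 := h2.rpow_const (p := -(d:ℝ)/2) (Or.inl hbase.ne')
  have h2b := h1.const_mul (2:ℝ)
  have h4 : HasDerivAt (fun τ => x - μ τ) (-(deriv μ t)) t := by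
    simpa using ((hμ t).hasDerivAt).const_sub x
  have h5 := h4.inner ℝ h4
  simp only [real_inner_self_eq_norm_sq] at h5
  have h5' : HasDerivAt (fun τ => ‖x - μ τ‖ ^ 2)
      (-(2 * (inner ℝ (x - μ t) (deriv μ t) : ℝ))) t := by
    refine h5.congr_deriv (Eq.symm ?_)
    simp only [inner_neg_left, inner_neg_right, real_inner_comm (deriv μ t) (x - μ t)]
    ring
  have h6 := h5'.neg
  have h7 := h6.div h2b (by positivity)
  have h8 := h7.exp
  have h9 := h3.mul h8
  rw [(show HasDerivAt (fun τ => (2 * π * (σ τ) ^ 2) ^ (-(d : ℝ) / 2) *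
        Real.exp (-‖x - μ τ‖ ^ 2 / (2 * (σ τ) ^ 2))) _ t from h9).deriv]
  simp only [Pi.neg_apply, Pi.div_apply]
  rw [Real.rpow_sub hbase, Real.rpow_one]
  set I := (inner ℝ (x - μ t) (deriv μ t) : ℝ) with hI
  set R := ‖x - μ t‖ ^ 2 with hR
  field_simp
  ring

lemma gaussian_div (d : ℕ) (σ : ℝ → ℝ) (hσpos : ∀ t, 0 < σ t)
    (μ : ℝ → EuclideanSpace ℝ (Fin d))
    (t : ℝ) (x : EuclideanSpace ℝ (Fin d)) :
    divergence (fun y => ((2 * π * (σ t) ^ 2) ^ (-(d : ℝ) / 2) *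
        Real.exp (-‖y - μ t‖ ^ 2 / (2 * (σ t) ^ 2))) •
        ((deriv σ t / σ t) • (y - μ t) + deriv μ t)) x
      = ((2 * π * (σ t) ^ 2) ^ (-(d : ℝ) / 2) *
          Real.exp (-‖x - μ t‖ ^ 2 / (2 * (σ t) ^ 2))) *
        ((deriv σ t / σ t) * d
          - (deriv σ t / σ t) * ‖x - μ t‖ ^ 2 / (σ t) ^ 2
          - (inner ℝ (x - μ t) (deriv μ t) : ℝ) / (σ t) ^ 2) := by
  have hσne : σ t ≠ 0 := (hσpos t).ne'
  set A : ℝ := (2 * π * (σ t) ^ 2) ^ (-(d : ℝ) / 2) with hA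
  set P : ℝ := A * Real.exp (-‖x - μ t‖ ^ 2 / (2 * (σ t) ^ 2)) with hP
  have hid : HasFDerivAt (fun y : EuclideanSpace ℝ (Fin d) => y - μ t)
      (ContinuousLinearMap.id ℝ (EuclideanSpace ℝ (Fin d))) x := by
    simpa using (hasFDerivAt_id x).sub_const (μ t)
  have hns := hid.inner ℝ hid
  simp only [real_inner_self_eq_norm_sq] at hns
  have hq0 := ((((hns.neg).const_mul ((2 * (σ t) ^ 2)⁻¹)).exp).const_mul A)
  have hfun : (fun y : EuclideanSpace ℝ (Fin d) =>
        A * Real.exp (-‖y - μ t‖ ^ 2 / (2 * (σ t) ^ 2)))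
      = (fun y : EuclideanSpace ℝ (Fin d) =>
        A * Real.exp ((2 * (σ t) ^ 2)⁻¹ * -‖y - μ t‖ ^ 2)) := by
    funext y
    rw [div_eq_inv_mul]
  have hq : HasFDerivAt
      (fun y : EuclideanSpace ℝ (Fin d) => A * Real.exp (-‖y - μ t‖ ^ 2 / (2 * (σ t) ^ 2)))
      ((P * (-1 / (σ t) ^ 2)) • (innerSL ℝ (x - μ t))) x := by
    rw [hfun]
    refine hq0.congr_fderiv (Eq.symm ?_)
    ext h
    simp only [ContinuousLinearMap.coe_smul', Pi.smul_apply, ContinuousLinearMap.neg_apply,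
      ContinuousLinearMap.coe_comp', Function.comp_apply, ContinuousLinearMap.prod_apply,
      ContinuousLinearMap.coe_id', id_eq, fderivInnerCLM_apply, innerSL_apply_apply, smul_eq_mul]
    rw [real_inner_comm h (x - μ t), ← div_eq_inv_mul]
    simp only [Pi.neg_apply]
    rw [hP]
    set EX := Real.exp (-‖x - μ t‖ ^ 2 / (2 * (σ t) ^ 2)) with hEX
    field_simp
    ring
  have hu' : HasFDerivAt
      (fun y : EuclideanSpace ℝ (Fin d) => (deriv σ t / σ t) • (y - μ t) + deriv μ t)
      ((deriv σ t / σ t) • ContinuousLinearMap.id ℝ (EuclideanSpace ℝ (Fin d))) x :=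
    (hid.const_smul (deriv σ t / σ t)).add_const (deriv μ t)
  have hv := hq.smul hu'
  rw [divergence, (show HasFDerivAt (fun y : EuclideanSpace ℝ (Fin d) =>
      (A * Real.exp (-‖y - μ t‖ ^ 2 / (2 * (σ t) ^ 2))) • ((deriv σ t / σ t) • (y - μ t) + deriv μ t)) _ x from hv).fderiv]
  rw [ContinuousLinearMap.coe_add, map_add, smul_smul, trace_smul_id', trace_smulRight']
  simp only [ContinuousLinearMap.coe_smul', Pi.smul_apply, innerSL_apply_apply, smul_eq_mul]
  rw [inner_add_right, real_inner_smul_right, real_inner_self_eq_norm_sq, ← hP]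
  field_simp
  ring

theorem gaussian_conditional_continuity_equation
    (d : ℕ) (hd : 0 < d)
    (σ : ℝ → ℝ) (hσ : Differentiable ℝ σ) (hσpos : ∀ t, 0 < σ t)
    (μ : ℝ → EuclideanSpace ℝ (Fin d)) (hμ : Differentiable ℝ μ)
    (p : ℝ → EuclideanSpace ℝ (Fin d) → ℝ)
    (hp : ∀ t x, p t x =
      (2 * π * (σ t) ^ 2) ^ (-(d : ℝ) / 2) *
        Real.exp (-‖x - μ t‖ ^ 2 / (2 * (σ t) ^ 2)))
    (u : ℝ → EuclideanSpace ℝ (Fin d) → EuclideanSpace ℝ (Fin d))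
    (hu : ∀ t x, u t x = (deriv σ t / σ t) • (x - μ t) + deriv μ t) :
    ∀ (t : ℝ) (x : EuclideanSpace ℝ (Fin d)),
      deriv (fun τ => p τ x) t + divergence (fun y => p t y • u t y) x = 0 := by
  intro t x
  simp only [hp, hu]
  rw [gaussian_time_deriv d σ hσ hσpos μ hμ t x, gaussian_div d σ hσpos μ t x]
  have hσne : σ t ≠ 0 := (hσpos t).ne'
  field_simp
  ring
end

section
/- Let d be a positive integer, let σ : ℝ → ℝ be differentiable with σ(t) > 0 for all t, and let μ : ℝ → ℝ^d (Euclidean space) be differentiable. Fix t ∈ ℝ and define the density q(x) = (2π σ(t)²)^{-d/2} exp(−‖x − μ(t)‖² / (2σ(t)²)) and the velocity field u(x) = (σ'(t)/σ(t))·(x − μ(t)) + μ'(t). Then the divergence of the vector field x ↦ q(x) u(x) satisfies, for every x ∈ ℝ^d, div(q·u)(x) = (σ'(t)/σ(t))·( d − ‖x − μ(t)‖²/σ(t)² )·q(x) − ( ⟪x − μ(t), μ'(t)⟫ / σ(t)² )·q(x). -/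
open Real
open scoped RealInnerProductSpace

lemma trace_smulRight'_s2 {E : Type*} [NormedAddCommGroup E] [NormedSpace ℝ E]
    [FiniteDimensional ℝ E] (f : E →L[ℝ] ℝ) (v : E) :
    LinearMap.trace ℝ E (f.smulRight v).toLinearMap = f v := by
  classical
  let b := Module.finBasis ℝ E
  rw [LinearMap.trace_eq_matrix_trace ℝ b, Matrix.trace]
  conv_rhs => rw [← b.sum_repr v]
  simp [LinearMap.toMatrix_apply, Matrix.diag, map_sum, mul_comm, map_smul, smul_eq_mul]
  conv_rhs => rw [← b.sum_repr v, map_sum]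
  exact Finset.sum_congr rfl fun i _ => by rw [map_smul, smul_eq_mul, mul_comm]

theorem gaussian_flux_divergence
    (d : ℕ) (hd : 0 < d)
    (σ : ℝ → ℝ) (hσ : Differentiable ℝ σ) (hσpos : ∀ t, 0 < σ t)
    (μ : ℝ → EuclideanSpace ℝ (Fin d)) (hμ : Differentiable ℝ μ)
    (t : ℝ)
    (q : EuclideanSpace ℝ (Fin d) → ℝ)
    (hq : ∀ x, q x =
      (2 * π * (σ t) ^ 2) ^ (-(d : ℝ) / 2) *
        Real.exp (-‖x - μ t‖ ^ 2 / (2 * (σ t) ^ 2)))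
    (u : EuclideanSpace ℝ (Fin d) → EuclideanSpace ℝ (Fin d))
    (hu : ∀ x, u x = (deriv σ t / σ t) • (x - μ t) + deriv μ t) :
    ∀ x : EuclideanSpace ℝ (Fin d),
      divergence (fun y => q y • u y) x =
        (deriv σ t / σ t) * ((d : ℝ) - ‖x - μ t‖ ^ 2 / (σ t) ^ 2) * q x
          - (⟪x - μ t, deriv μ t⟫ / (σ t) ^ 2) * q x := by
  intro x
  set s : ℝ := σ t with hs
  set c : ℝ := deriv σ t / σ t with hc
  set m : EuclideanSpace ℝ (Fin d) := μ t with hm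
  set v : EuclideanSpace ℝ (Fin d) := deriv μ t with hv
  set C : ℝ := (2 * π * s ^ 2) ^ (-(d : ℝ) / 2) with hC
  have hs0 : s ≠ 0 := (hσpos t).ne'
  -- derivative of the squared norm
  have h1 : HasFDerivAt (fun y : EuclideanSpace ℝ (Fin d) => ‖y - m‖ ^ 2)
      (2 • (innerSL ℝ (x - m))) x := by
    simpa using ((hasFDerivAt_id x).sub_const m).norm_sq
  -- derivative of the exponent
  have h2 : HasFDerivAt (fun y : EuclideanSpace ℝ (Fin d) => -‖y - m‖ ^ 2 / (2 * s ^ 2))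
      ((-(2 * s ^ 2)⁻¹) • (2 • (innerSL ℝ (x - m)))) x := by
    have h := h1.const_mul (-(2 * s ^ 2)⁻¹)
    have he : (fun y : EuclideanSpace ℝ (Fin d) => -(2 * s ^ 2)⁻¹ * ‖y - m‖ ^ 2)
        = fun y : EuclideanSpace ℝ (Fin d) => -‖y - m‖ ^ 2 / (2 * s ^ 2) := by
      funext y; ring
    rwa [he] at h
  -- derivative of q
  have hQ : HasFDerivAt q
      ((q x * (-(2 * s ^ 2)⁻¹)) • (2 • (innerSL ℝ (x - m)))) x := by
    have : HasFDerivAt (fun y : EuclideanSpace ℝ (Fin d) =>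
        C * Real.exp (-‖y - m‖ ^ 2 / (2 * s ^ 2)))
        (C • (Real.exp (-‖x - m‖ ^ 2 / (2 * s ^ 2)) •
          ((-(2 * s ^ 2)⁻¹) • (2 • (innerSL ℝ (x - m)))))) x :=
      (h2.exp).const_smul C
    have hfun : q = fun y : EuclideanSpace ℝ (Fin d) =>
        C * Real.exp (-‖y - m‖ ^ 2 / (2 * s ^ 2)) := funext fun y => hq y
    rw [hfun]
    convert this using 1
    simp only [smul_smul]
    congr 1
    ring
  -- derivative of u
  have hU : HasFDerivAt u (c • (ContinuousLinearMap.id ℝ (EuclideanSpace ℝ (Fin d)))) x := by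
    have hfun : u = fun y : EuclideanSpace ℝ (Fin d) => c • (y - m) + v :=
      funext fun y => hu y
    rw [hfun]
    exact (((hasFDerivAt_id x).sub_const m).const_smul c).add_const v
  have H := hQ.smul hU
  rw [divergence, (show HasFDerivAt (fun y => q y • u y) _ x from H).fderiv]
  rw [ContinuousLinearMap.coe_add, map_add]
  rw [show ((q x • (c • ContinuousLinearMap.id ℝ (EuclideanSpace ℝ (Fin d)))) :
      EuclideanSpace ℝ (Fin d) →L[ℝ] EuclideanSpace ℝ (Fin d)).toLinearMap
      = (q x * c) • LinearMap.id by
    ext y; simp [mul_smul]]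
  rw [map_smul, LinearMap.trace_id, trace_smulRight'_s2]
  simp only [smul_eq_mul, finrank_euclideanSpace_fin]
  rw [hu x]
  have hinner : ⟪x - m, c • (x - m) + v⟫ = c * ‖x - m‖ ^ 2 + ⟪x - m, v⟫ := by
    rw [inner_add_right, real_inner_smul_right, real_inner_self_eq_norm_sq]
  simp only [ContinuousLinearMap.smul_apply, ContinuousLinearMap.coe_smul',
    Pi.smul_apply, innerSL_apply_apply, smul_eq_mul, hinner]
  field_simp
  ring
end

section
/- Let σ_x > 0 and σ_ch > 0, let t⋆ < 1, and let σ : ℝ → ℝ be differentiable with σ(t⋆) = σ_ch and σ(1) = 0. Define s(t) = √(σ_x² + σ(t)²), so s(t) > 0 for all t. Suppose x : ℝ → ℝ is differentiable on [t⋆, 1], satisfies x'(t) = (s'(t)/s(t))·x(t) for all t ∈ [t⋆, 1], and has initial condition x(t⋆) = y. Then the terminal value is x(1) = ( σ_x / √(σ_x² + σ_ch²) ) · y. In particular, the land-then-transport (LTT) decoder induced by the ideal probability-flow ODE is the linear estimator y ↦ a_LTT · y with coefficient a_LTT = σ_x / √(σ_x² + σ_ch²). -/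
theorem ltt_scalar_decoder_is_linear
    (σx σch : ℝ) (hσx : 0 < σx) (hσch : 0 < σch)
    (tstar : ℝ) (ht : tstar < 1)
    (σ : ℝ → ℝ) (hσ : Differentiable ℝ σ)
    (hσstar : σ tstar = σch) (hσone : σ 1 = 0)
    (s : ℝ → ℝ) (hs : ∀ t, s t = Real.sqrt (σx ^ 2 + (σ t) ^ 2))
    (y : ℝ)
    (x : ℝ → ℝ)
    (hx : ∀ t ∈ Set.Icc tstar 1,
      HasDerivWithinAt x (deriv s t / s t * x t) (Set.Icc tstar 1) t)
    (hx0 : x tstar = y) :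
    x 1 = σx / Real.sqrt (σx ^ 2 + σch ^ 2) * y := by
  have hspos : ∀ t, 0 < s t := by
    intro t
    rw [hs t]
    apply Real.sqrt_pos.mpr
    positivity
  have hsdiff : Differentiable ℝ s := by
    have : Differentiable ℝ (fun t => Real.sqrt (σx ^ 2 + (σ t) ^ 2)) := by
      apply Differentiable.sqrt
      · exact (differentiable_const _).add (hσ.pow 2)
      · intro t; positivity
    have heq : s = fun t => Real.sqrt (σx ^ 2 + (σ t) ^ 2) := funext hs
    rw [heq]; exact this
  -- f = x / s has zero derivative on Icc
  set f : ℝ → ℝ := fun t => x t / s t with hf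
  have hderiv : ∀ t ∈ Set.Icc tstar 1,
      HasDerivWithinAt f 0 (Set.Icc tstar 1) t := by
    intro t htmem
    have hsd : HasDerivWithinAt s (deriv s t) (Set.Icc tstar 1) t :=
      ((hsdiff t).hasDerivAt).hasDerivWithinAt
    have hxt := hx t htmem
    have h := hxt.div hsd (ne_of_gt (hspos t))
    convert h using 1
    have hne := (hspos t).ne'
    · rfl
    · rfl
    · rfl
    rw [div_mul_eq_mul_div, div_mul_cancel₀ _ (hspos t).ne']
    ring
  have hcont : ContinuousOn f (Set.Icc tstar 1) := by
    intro t htmem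
    exact ((hx t htmem).continuousWithinAt.div
      (hsdiff.continuous.continuousWithinAt) (ne_of_gt (hspos t)))
  have hconst : ∀ t ∈ Set.Icc tstar 1, f t = f tstar := by
    intro t htmem
    apply constant_of_has_deriv_right_zero hcont
    · intro u humem
      have hu : u ∈ Set.Icc tstar 1 := Set.Ico_subset_Icc_self humem
      refine (hderiv u hu).mono_of_mem_nhdsWithin ?_
      have : Set.Icc tstar 1 ∈ nhdsWithin u (Set.Ici u) := by
        apply mem_nhdsWithin.mpr
        exact ⟨Set.Iio 1, isOpen_Iio, humem.2, by
          rintro v ⟨hv1, hv2⟩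
          exact ⟨le_trans humem.1 hv2, le_of_lt hv1⟩⟩
      exact this
    · exact htmem
  have h1 : f 1 = f tstar := hconst 1 ⟨le_of_lt ht, le_refl 1⟩
  have hs1 : s 1 = σx := by
    rw [hs 1, hσone]
    simp [Real.sqrt_sq hσx.le]
  have hst : s tstar = Real.sqrt (σx ^ 2 + σch ^ 2) := by
    rw [hs tstar, hσstar]
  have hstpos : (0:ℝ) < Real.sqrt (σx ^ 2 + σch ^ 2) := by
    apply Real.sqrt_pos.mpr; positivity
  have := h1
  simp only [hf] at this
  rw [hs1, hst, hx0] at this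
  field_simp at this
  field_simp
  linarith [this]
end

section
/- Let s : ℝ → ℝ be differentiable with s(t) > 0 for all t. Define the scalar Gaussian density p(t,x) = (2π s(t)²)^{-1/2} exp(−x² / (2 s(t)²)) and the linear velocity field v(t,x) = (s'(t)/s(t))·x. Then (p, v) satisfies the one-dimensional continuity equation: for all t ∈ ℝ and x ∈ ℝ, ∂_t p(t,x) + ∂_x ( p(t,x) · v(t,x) ) = 0. -/
open Real

theorem scalar_gaussian_continuity_equation
    (s : ℝ → ℝ) (hs : Differentiable ℝ s) (hspos : ∀ t, 0 < s t)
    (p : ℝ → ℝ → ℝ)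
    (hp : ∀ t x, p t x =
      (2 * π * (s t) ^ 2) ^ (-(1 : ℝ) / 2) *
        Real.exp (-x ^ 2 / (2 * (s t) ^ 2)))
    (v : ℝ → ℝ → ℝ)
    (hv : ∀ t x, v t x = deriv s t / s t * x) :
    ∀ (t x : ℝ),
      deriv (fun τ => p τ x) t + deriv (fun ξ => p t ξ * v t ξ) x = 0 := by
  intro t x
  have hσ : 0 < s t := hspos t
  have hσne : s t ≠ 0 := ne_of_gt hσ
  have hB : (0:ℝ) < 2 * π * (s t) ^ 2 := by positivity
  have hBne : (2 * π * (s t) ^ 2) ≠ 0 := ne_of_gt hB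
  -- spatial derivative
  have hE : HasDerivAt (fun ξ : ℝ => Real.exp (-ξ ^ 2 / (2 * (s t) ^ 2)))
      (Real.exp (-x ^ 2 / (2 * (s t) ^ 2)) * (-x / (s t) ^ 2)) x := by
    have h1 : HasDerivAt (fun ξ : ℝ => -ξ ^ 2 / (2 * (s t) ^ 2)) (-x / (s t) ^ 2) x := by
      have h := ((hasDerivAt_pow 2 x).fun_neg).div_const (2 * (s t) ^ 2)
      refine h.congr_deriv ?_
      field_simp
      ring
    exact h1.exp
  have h2 : HasDerivAt (fun ξ : ℝ => ξ * Real.exp (-ξ ^ 2 / (2 * (s t) ^ 2)))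
      (Real.exp (-x ^ 2 / (2 * (s t) ^ 2)) +
        x * (Real.exp (-x ^ 2 / (2 * (s t) ^ 2)) * (-x / (s t) ^ 2))) x := by
    have h := (hasDerivAt_id x).fun_mul hE
    refine h.congr_deriv ?_
    simp only [id_eq]
    ring
  have feq : (fun ξ => p t ξ * v t ξ)
      = fun ξ => ((2 * π * (s t) ^ 2) ^ (-(1:ℝ)/2) * (deriv s t / s t)) *
          (ξ * Real.exp (-ξ ^ 2 / (2 * (s t) ^ 2))) := by
    funext ξ; rw [hp, hv]; ring
  have hx2 := h2.const_mul ((2 * π * (s t) ^ 2) ^ (-(1:ℝ)/2) * (deriv s t / s t))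
  -- time derivative
  have h3 : HasDerivAt (fun τ => 2 * π * (s τ) ^ 2)
      (2 * π * (2 * (s t) ^ 1 * deriv s t)) t :=
    (((hs t).hasDerivAt).pow 2).const_mul (2 * π)
  have h3' : HasDerivAt (fun τ => 2 * (s τ) ^ 2)
      (2 * (2 * (s t) ^ 1 * deriv s t)) t :=
    (((hs t).hasDerivAt).pow 2).const_mul 2
  have h4 : HasDerivAt (fun τ => (2 * π * (s τ) ^ 2) ^ (-(1:ℝ)/2))
      ((2 * π * (2 * (s t) ^ 1 * deriv s t)) * (-(1:ℝ)/2) *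
        (2 * π * (s t) ^ 2) ^ ((-(1:ℝ)/2) - 1)) t :=
    h3.rpow_const (Or.inl hBne)
  have h5 : HasDerivAt (fun τ : ℝ => -x ^ 2 / (2 * (s τ) ^ 2))
      ((0 * (2 * (s t) ^ 2) - (-x ^ 2) * (2 * (2 * (s t) ^ 1 * deriv s t)))
        / (2 * (s t) ^ 2) ^ 2) t :=
    (hasDerivAt_const t (-x ^ 2)).div h3' (by positivity)
  have h6 := h5.exp
  have ht := h4.fun_mul h6
  have fteq : (fun τ => p τ x)
      = fun τ => (2 * π * (s τ) ^ 2) ^ (-(1:ℝ)/2) *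
          Real.exp (-x ^ 2 / (2 * (s τ) ^ 2)) := by
    funext τ; rw [hp]
  rw [fteq, feq, ht.deriv, hx2.deriv]
  have hBr : (2 * π * (s t) ^ 2) ^ ((-(1:ℝ)/2) - 1)
      = (2 * π * (s t) ^ 2) ^ (-(1:ℝ)/2) * (2 * π * (s t) ^ 2)⁻¹ := by
    rw [show ((-(1:ℝ)/2) - 1) = (-(1:ℝ)/2) + (-1) by ring, Real.rpow_add hB,
      Real.rpow_neg_one]
  rw [hBr]
  have hπ : π ≠ 0 := Real.pi_ne_zero
  field_simp
  ring
end

section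
/- Fix σ_x > 0 and, for σ > 0, define a_LTT(σ) = σ_x / √(σ_x² + σ²) and a_MMSE(σ) = σ_x² / (σ_x² + σ²). Then, as σ → 0⁺, (σ_x² + σ²)·( a_LTT(σ) − a_MMSE(σ) )² = σ⁴ / (4 σ_x²) + o(σ⁴); equivalently, the limit as σ → 0⁺ of (σ_x² + σ²)·( a_LTT(σ) − a_MMSE(σ) )² / σ⁴ equals 1 / (4 σ_x²). Consequently, the excess mean-squared error of the LTT decoder over the MMSE estimator in the scalar Gaussian channel model, which equals (σ_x² + σ²)(a_LTT(σ) − a_MMSE(σ))², is O(σ⁴) in the high-SNR regime σ → 0⁺. -/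
open Filter Asymptotics

theorem ltt_excess_mse_high_snr
    (σx : ℝ) (hσx : 0 < σx)
    (aLTT aMMSE : ℝ → ℝ)
    (haLTT : ∀ σ, aLTT σ = σx / Real.sqrt (σx ^ 2 + σ ^ 2))
    (haMMSE : ∀ σ, aMMSE σ = σx ^ 2 / (σx ^ 2 + σ ^ 2)) :
    (fun σ : ℝ => (σx ^ 2 + σ ^ 2) * (aLTT σ - aMMSE σ) ^ 2 - σ ^ 4 / (4 * σx ^ 2))
        =o[nhdsWithin 0 (Set.Ioi 0)] (fun σ : ℝ => σ ^ 4)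
      ∧ Tendsto
          (fun σ : ℝ => (σx ^ 2 + σ ^ 2) * (aLTT σ - aMMSE σ) ^ 2 / σ ^ 4)
          (nhdsWithin 0 (Set.Ioi 0)) (nhds (1 / (4 * σx ^ 2)))
      ∧ (fun σ : ℝ => (σx ^ 2 + σ ^ 2) * (aLTT σ - aMMSE σ) ^ 2)
          =O[nhdsWithin 0 (Set.Ioi 0)] (fun σ : ℝ => σ ^ 4) := by
  set l := nhdsWithin (0:ℝ) (Set.Ioi 0) with hl
  set g : ℝ → ℝ := fun σ =>
    σx ^ 2 / ((σx ^ 2 + σ ^ 2) * (Real.sqrt (σx ^ 2 + σ ^ 2) + σx) ^ 2) with hg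
  -- key algebraic identity
  have key : ∀ σ : ℝ, (σx ^ 2 + σ ^ 2) * (aLTT σ - aMMSE σ) ^ 2 = g σ * σ ^ 4 := by
    intro σ
    have hs : (0:ℝ) < σx ^ 2 + σ ^ 2 := by positivity
    have ht0 : 0 < Real.sqrt (σx ^ 2 + σ ^ 2) := Real.sqrt_pos.mpr hs
    set t := Real.sqrt (σx ^ 2 + σ ^ 2) with hT
    have ht : t ^ 2 = σx ^ 2 + σ ^ 2 := Real.sq_sqrt hs.le
    have hσ2 : σ ^ 2 = t ^ 2 - σx ^ 2 := by rw [ht]; ring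
    have hσ4 : σ ^ 4 = (t ^ 2 - σx ^ 2) ^ 2 := by rw [← hσ2]; ring
    have htx : 0 < t + σx := by positivity
    rw [haLTT, haMMSE, hg]
    simp only [← hT, ← ht, hσ4, hσ2]
    rw [show σx ^ 2 + (t ^ 2 - σx ^ 2) = t ^ 2 by ring, Real.sqrt_sq ht0.le]
    field_simp
    ring
  -- continuity of g at 0 within
  have hg0 : g 0 = 1 / (4 * σx ^ 2) := by
    have : Real.sqrt (σx ^ 2 + 0 ^ 2) = σx := by
      rw [show σx ^ 2 + (0:ℝ) ^ 2 = σx ^ 2 by ring]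
      exact Real.sqrt_sq hσx.le
    rw [hg]; simp only [this]
    field_simp; ring
  have hgc : Tendsto g l (nhds (1 / (4 * σx ^ 2))) := by
    rw [← hg0]
    apply ContinuousAt.continuousWithinAt
    have hs : (0:ℝ) < σx ^ 2 + (0:ℝ) ^ 2 := by positivity
    have h1 : (σx ^ 2 + (0:ℝ) ^ 2) * (Real.sqrt (σx ^ 2 + (0:ℝ) ^ 2) + σx) ^ 2 ≠ 0 := by
      have := Real.sqrt_pos.mpr hs
      positivity
    exact ContinuousAt.div continuousAt_const
      (by fun_prop) h1
  have hne : ∀ σ ∈ Set.Ioi (0:ℝ), (σ:ℝ) ^ 4 ≠ 0 := by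
    intro σ hσ; exact pow_ne_zero _ (ne_of_gt hσ)
  -- Tendsto part
  have htend : Tendsto (fun σ : ℝ => (σx ^ 2 + σ ^ 2) * (aLTT σ - aMMSE σ) ^ 2 / σ ^ 4) l
      (nhds (1 / (4 * σx ^ 2))) := by
    apply hgc.congr'
    filter_upwards [self_mem_nhdsWithin] with σ hσ
    rw [key σ, mul_div_assoc, div_self (hne σ hσ), mul_one]
  refine ⟨?_, htend, ?_⟩
  · have h1 := hgc.sub_const (1 / (4 * σx ^ 2))
    rw [sub_self] at h1
    have h2 : (fun σ => g σ - 1 / (4 * σx ^ 2)) =o[l] (fun _ => (1:ℝ)) :=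
      (isLittleO_one_iff ℝ).mpr h1
    have h3 := h2.mul_isBigO (isBigO_refl (fun σ : ℝ => σ ^ 4) l)
    apply h3.congr' _ (by filter_upwards with σ; ring)
    filter_upwards with σ
    rw [key σ]; ring
  · have : (fun σ : ℝ => g σ * σ ^ 4) =O[l] (fun σ : ℝ => σ ^ 4) :=
      (hgc.isBigO_one ℝ).mul (isBigO_refl _ _) |>.congr (fun _ => rfl) (fun σ => one_mul _)
    exact (this.congr' (by filter_upwards with σ; rw [key σ]) (by rfl))
end
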